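/- For every λ ∈ (0,1/2) and δ > 0 there exist constants γ, β > 0 (depending only on λ, δ) such that: for all p ∈ (λ, 1−λ) and all h : {0,1}^{2n} → {0,1} with E_{μ_p}[h] ≥ δ and total influence I^{(p)}(h) ≤ γ·n, it holds that E_{z∼ρ_p}[h(z)] ≥ β, where ρ_p is the pull-back distribution. -/

import Mathlib

open Finset

noncomputable def w (p : ℝ) (b : Bool) : ℝ := if b then p else 1 - p

noncomputable def mu (p : ℝ) {n : ℕ} (x : Fin n → Bool) : ℝ := ∏ i, w p (x i)

def bflip {n : ℕ} (x : Fin n → Bool) (i : Fin n) : Fin n → Bool :=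
  Function.update x i (!(x i))

/-- `Inf_i^{(p)}(h) = p(1−p)·Pr_{μ_p}[h(x) ≠ h(x⊕i)]` -/
noncomputable def pinf (p : ℝ) {n : ℕ} (h : (Fin n → Bool) → Bool) (i : Fin n) : ℝ :=
  p * (1 - p) * ∑ x : Fin n → Bool, if h x ≠ h (bflip x i) then mu p x else 0

/-- total influence `I^{(p)}(h) = ∑_i Inf_i^{(p)}(h)` -/
noncomputable def totalInf (p : ℝ) {n : ℕ} (h : (Fin n → Bool) → Bool) : ℝ :=
  ∑ i, pinf p h i

/-- A 2-to-1 map `π : [2n] → [n]`: every fiber has exactly two elements. -/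
abbrev IsTwoToOne {n : ℕ} (π : Fin (2*n) → Fin n) : Prop :=
  ∀ j : Fin n, (Finset.univ.filter (fun i => π i = j)).card = 2

/-- The pull-back distribution `ρ_p` on `{0,1}^{2n}`: draw a uniformly random 2-to-1 map
`π : [2n] → [n]` and `x ∼ μ_{p,n}`, and output `z = π^{-1}(x)`, i.e. `z = x ∘ π`. -/
noncomputable def rho (p : ℝ) (n : ℕ) (z : Fin (2*n) → Bool) : ℝ :=
  (∑ π ∈ Finset.univ.filter (fun π : Fin (2*n) → Fin n => IsTwoToOne π),
      ∑ x : Fin n → Bool, if z = x ∘ π then mu p x else 0) /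
    ((Finset.univ.filter (fun π : Fin (2*n) → Fin n => IsTwoToOne π)).card : ℝ)

section base
variable {p : ℝ} {n : ℕ}

lemma w_nonneg (hp : 0 ≤ p) (hp1 : p ≤ 1) (b : Bool) : 0 ≤ w p b := by
  cases b <;> simp [w] <;> linarith

lemma w_le_one (hp : 0 ≤ p) (hp1 : p ≤ 1) (b : Bool) : w p b ≤ 1 := by
  cases b <;> simp [w] <;> linarith

lemma mu_nonneg (hp : 0 ≤ p) (hp1 : p ≤ 1) (x : Fin n → Bool) : 0 ≤ mu p x :=
  Finset.prod_nonneg fun i _ => w_nonneg hp hp1 _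

lemma sum_mu (hp : 0 ≤ p) : (∑ x : Fin n → Bool, mu p x) = 1 := by
  have : (∏ _i : Fin n, (∑ b : Bool, w p b)) = ∑ x : Fin n → Bool, mu p x := by
    rw [Finset.prod_univ_sum]
    rw [Fintype.piFinset_univ]
    rfl
  rw [← this]
  have h1 : (∑ b : Bool, w p b) = 1 := by simp [w]
  rw [h1, Finset.prod_const, one_pow]

/-- weight of a boolean vector -/
def wt {n : ℕ} (z : Fin n → Bool) : ℕ := (Finset.univ.filter (fun i => z i = true)).card

lemma mu_eq_pow (z : Fin n → Bool) : mu p z = p ^ wt z * (1 - p) ^ (n - wt z) := by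
  rw [mu, ← Finset.prod_filter_mul_prod_filter_not Finset.univ (fun i => z i = true)]
  congr 1
  · rw [Finset.prod_congr rfl (fun i hi => ?_), Finset.prod_const, wt]
    simp only [Finset.mem_filter] at hi
    simp [w, hi.2]
  · rw [Finset.prod_congr rfl (fun i hi => ?_), Finset.prod_const]
    · congr 1
      have h2 := Finset.card_filter_add_card_filter_not (s := (Finset.univ : Finset (Fin n)))
        (p := fun i => z i = true)
      simp only [Finset.card_univ, Fintype.card_fin] at h2
      have h3 : wt z ≤ n := by
        rw [wt]; calc (Finset.univ.filter (fun i => z i = true)).card ≤ (Finset.univ : Finset (Fin n)).card := Finset.card_filter_le _ _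
          _ = n := by simp
      rw [wt] at *
      omega
    · simp only [Finset.mem_filter] at hi
      simp [w, Bool.not_eq_true _ |>.mp hi.2]

end base

section flip
variable {p : ℝ} {n : ℕ}

lemma mu_split (x : Fin n → Bool) (i : Fin n) :
    mu p x = w p (x i) * ∏ j ∈ Finset.univ.erase i, w p (x j) :=
  (Finset.mul_prod_erase Finset.univ _ (Finset.mem_univ i)).symm

lemma mu_bflip (x : Fin n → Bool) (i : Fin n) :
    mu p (bflip x i) = w p (!(x i)) * ∏ j ∈ Finset.univ.erase i, w p (x j) := by
  rw [mu_split (bflip x i) i]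
  congr 1
  · simp [bflip]
  · exact Finset.prod_congr rfl fun j hj => by
      simp [bflip, Function.update_of_ne (Finset.ne_of_mem_erase hj)]

lemma mu_bflip_ge {lam : ℝ} (hl : 0 < lam) (hp : lam ≤ p) (hp' : p ≤ 1 - lam) (hlam : lam < 1/2)
    (x : Fin n → Bool) (i : Fin n) : lam * mu p x ≤ mu p (bflip x i) := by
  have hp0 : 0 ≤ p := le_trans hl.le hp
  have hp1 : p ≤ 1 := by linarith
  have hR : 0 ≤ ∏ j ∈ Finset.univ.erase i, w p (x j) :=
    Finset.prod_nonneg fun j _ => w_nonneg hp0 hp1 _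
  rw [mu_bflip, mu_split x i]
  have h1 : lam ≤ w p (!(x i)) := by cases x i <;> simp [w] <;> linarith
  have h2 : w p (x i) ≤ 1 := w_le_one hp0 hp1 _
  have h0 : 0 ≤ w p (x i) := w_nonneg hp0 hp1 _
  calc lam * (w p (x i) * ∏ j ∈ Finset.univ.erase i, w p (x j))
      ≤ lam * (1 * ∏ j ∈ Finset.univ.erase i, w p (x j)) := by
        apply mul_le_mul_of_nonneg_left (mul_le_mul_of_nonneg_right h2 hR) hl.le
    _ = lam * ∏ j ∈ Finset.univ.erase i, w p (x j) := by ring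
    _ ≤ w p (!(x i)) * ∏ j ∈ Finset.univ.erase i, w p (x j) :=
        mul_le_mul_of_nonneg_right h1 hR

lemma wt_card_filter (z : Fin n → Bool) :
    (wt z : ℕ) = ∑ j : Fin n, (if z j = true then 1 else 0) := by
  rw [wt, Finset.card_filter]

lemma wt_add_wt_bflip (z : Fin n → Bool) (i : Fin n) :
    wt z + wt (bflip z i) = 2 * (∑ j ∈ Finset.univ.erase i, (if z j = true then 1 else 0)) + 1 := by
  rw [wt_card_filter, wt_card_filter]
  rw [← Finset.add_sum_erase _ _ (Finset.mem_univ i), ← Finset.add_sum_erase _ _ (Finset.mem_univ i)]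
  have h2 : ∑ j ∈ Finset.univ.erase i, (if bflip z i j = true then 1 else 0)
      = ∑ j ∈ Finset.univ.erase i, (if z j = true then (1:ℕ) else 0) :=
    Finset.sum_congr rfl fun j hj => by
      simp [bflip, Function.update_of_ne (Finset.ne_of_mem_erase hj)]
  rw [h2]
  have : bflip z i i = !(z i) := by simp [bflip]
  rw [this]
  cases z i <;> simp <;> omega

lemma even_wt_bflip_iff (z : Fin n → Bool) (i : Fin n) :
    Even (wt (bflip z i)) ↔ ¬ Even (wt z) := by
  have h := wt_add_wt_bflip z i
  rw [Nat.even_iff, Nat.even_iff]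
  omega

lemma bflip_involutive (i : Fin n) : Function.Involutive (fun z : Fin n → Bool => bflip z i) := by
  intro z
  simp only [bflip]
  rw [Function.update_idem]
  simp [Function.update_eq_self]

end flip
section star

/-- the binomial pmf -/
noncomputable def bpmf (n : ℕ) (p : ℝ) (j : ℕ) : ℝ := (n.choose j : ℝ) * p ^ j * (1 - p) ^ (n - j)

variable {p : ℝ} {n : ℕ}

lemma bpmf_nonneg (hp : 0 ≤ p) (hp1 : p ≤ 1) (j : ℕ) : 0 ≤ bpmf n p j := by
  have h : (0:ℝ) ≤ 1 - p := by linarith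
  exact mul_nonneg (mul_nonneg (Nat.cast_nonneg _) (pow_nonneg hp _)) (pow_nonneg h _)

lemma sum_bpmf (j : ℕ) : ∑ i ∈ Finset.range (n+1), bpmf n p i = 1 := by
  have := add_pow p (1-p) n
  simp only [add_sub_cancel, one_pow] at this
  rw [show ∑ i ∈ Finset.range (n+1), bpmf n p i
      = ∑ i ∈ Finset.range (n+1), p ^ i * (1-p) ^ (n-i) * (n.choose i : ℝ) from
    Finset.sum_congr rfl fun i _ => by rw [bpmf]; ring]
  exact this.symm

lemma sum_bpmf_le (s : Finset ℕ) (hp : 0 ≤ p) (hp1 : p ≤ 1) : ∑ i ∈ s, bpmf n p i ≤ 1 := by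
  classical
  have hsplit : ∑ i ∈ s, bpmf n p i
      = ∑ i ∈ s.filter (fun i => i < n+1), bpmf n p i
        + ∑ i ∈ s.filter (fun i => ¬ i < n+1), bpmf n p i :=
    (Finset.sum_filter_add_sum_filter_not s _ _).symm
  have h2 : ∑ i ∈ s.filter (fun i => ¬ i < n+1), bpmf n p i = 0 := by
    apply Finset.sum_eq_zero
    intro i hi
    simp only [Finset.mem_filter, not_lt] at hi
    have : n.choose i = 0 := Nat.choose_eq_zero_of_lt (by omega)
    simp [bpmf, this]
  have h1 : ∑ i ∈ s.filter (fun i => i < n+1), bpmf n p i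
      ≤ ∑ i ∈ Finset.range (n+1), bpmf n p i := by
    apply Finset.sum_le_sum_of_subset_of_nonneg
    · intro i hi
      simp only [Finset.mem_filter] at hi
      exact Finset.mem_range.mpr hi.2
    · intro i _ _; exact bpmf_nonneg hp hp1 i
  rw [hsplit, h2, add_zero]
  calc _ ≤ ∑ i ∈ Finset.range (n+1), bpmf n p i := h1
    _ = 1 := sum_bpmf 0

lemma bpmf_rec (j : ℕ) :
    bpmf n p (j+1) * ((j+1 : ℕ) : ℝ) * (1 - p) = bpmf n p j * ((n - j : ℕ) : ℝ) * p := by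
  rcases lt_or_ge j n with h | h
  · have hc : (n.choose (j+1) * (j+1) : ℕ) = n.choose j * (n - j) := Nat.choose_succ_right_eq n j
    have hcr : ((n.choose (j+1)):ℝ) * ((j:ℝ)+1) = ((n.choose j):ℝ) * ((n:ℝ) - (j:ℝ)) := by
      have := congrArg (fun m : ℕ => (m : ℝ)) hc
      push_cast [Nat.cast_sub h.le] at this
      linarith [this]
    have hsub : n - (j+1) + 1 = n - j := by omega
    rw [bpmf, bpmf]
    have hq : (1-p) ^ (n - j) = (1-p) ^ (n - (j+1)) * (1-p) := by rw [← pow_succ, hsub]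
    rw [hq]
    push_cast [Nat.cast_sub h.le]
    linear_combination (p ^ j * p * (1 - p) ^ (n - (j+1)) * (1-p)) * hcr
  · have h1 : n.choose (j+1) = 0 := Nat.choose_eq_zero_of_lt (by omega)
    have h2 : n - j = 0 := by omega
    simp [bpmf, h1, h2]

/-- In the case where the pmf is non-increasing from `k` on. -/
lemma bpmf_mono_right (hp : 0 < p) (hp1 : p < 1) {k : ℕ}
    (hcase : ((n - k : ℕ) : ℝ) * p ≤ ((k+1 : ℕ) : ℝ) * (1 - p)) :
    ∀ j, k ≤ j → bpmf n p j ≤ bpmf n p k := by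
  have hq : 0 < 1 - p := by linarith
  have step : ∀ j, k ≤ j → bpmf n p (j+1) ≤ bpmf n p j := by
    intro j hj
    have hrec := bpmf_rec (n := n) (p := p) j
    have hnn : 0 ≤ bpmf n p j := bpmf_nonneg hp.le hp1.le j
    have hmono : ((n - j : ℕ) : ℝ) * p ≤ ((j+1 : ℕ) : ℝ) * (1 - p) := by
      calc ((n - j : ℕ) : ℝ) * p ≤ ((n - k : ℕ) : ℝ) * p := by
            apply mul_le_mul_of_nonneg_right _ hp.le
            exact_mod_cast Nat.cast_le.mpr (Nat.sub_le_sub_left hj n)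
        _ ≤ ((k+1 : ℕ) : ℝ) * (1 - p) := hcase
        _ ≤ ((j+1 : ℕ) : ℝ) * (1 - p) := by
            apply mul_le_mul_of_nonneg_right _ hq.le
            exact_mod_cast Nat.succ_le_succ hj
    -- from hrec : bpmf (j+1) * (j+1) * q = bpmf j * (n-j) * p ≤ bpmf j * (j+1) * q
    have hle : bpmf n p (j+1) * (((j+1 : ℕ) : ℝ) * (1 - p)) ≤ bpmf n p j * (((j+1 : ℕ) : ℝ) * (1 - p)) := by
      have : bpmf n p j * (((n - j : ℕ) : ℝ) * p) ≤ bpmf n p j * (((j+1 : ℕ) : ℝ) * (1 - p)) :=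
        mul_le_mul_of_nonneg_left hmono hnn
      calc bpmf n p (j+1) * (((j+1 : ℕ) : ℝ) * (1 - p)) = bpmf n p (j+1) * ((j+1 : ℕ) : ℝ) * (1 - p) := by ring
        _ = bpmf n p j * ((n - j : ℕ) : ℝ) * p := hrec
        _ = bpmf n p j * (((n - j : ℕ) : ℝ) * p) := by ring
        _ ≤ _ := this
    have hpos : 0 < ((j+1 : ℕ) : ℝ) * (1 - p) := by
      apply mul_pos _ hq
      exact_mod_cast Nat.succ_pos j
    exact le_of_mul_le_mul_right hle hpos
  intro j hj
  induction j, hj using Nat.le_induction with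
  | base => exact le_rfl
  | succ m hm ih => exact le_trans (step m hm) ih

lemma bpmf_mono_left (hp : 0 < p) (hp1 : p < 1) {k : ℕ} (hk : k ≤ n)
    (hcase : ((k+1 : ℕ) : ℝ) * (1 - p) ≤ ((n - k : ℕ) : ℝ) * p) :
    ∀ j, j ≤ k → bpmf n p j ≤ bpmf n p k := by
  have hq : 0 < 1 - p := by linarith
  have step : ∀ j, j < k → bpmf n p j ≤ bpmf n p (j+1) := by
    intro j hj
    have hrec := bpmf_rec (n := n) (p := p) j
    have hnn : 0 ≤ bpmf n p (j+1) := bpmf_nonneg hp.le hp1.le _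
    have hmono : ((j+1 : ℕ) : ℝ) * (1 - p) ≤ ((n - j : ℕ) : ℝ) * p := by
      calc ((j+1 : ℕ) : ℝ) * (1 - p) ≤ ((k+1 : ℕ) : ℝ) * (1 - p) := by
            apply mul_le_mul_of_nonneg_right _ hq.le
            exact_mod_cast Nat.succ_le_succ hj.le
        _ ≤ ((n - k : ℕ) : ℝ) * p := hcase
        _ ≤ ((n - j : ℕ) : ℝ) * p := by
            apply mul_le_mul_of_nonneg_right _ hp.le
            exact_mod_cast Nat.cast_le.mpr (Nat.sub_le_sub_left hj.le n)
    have hpos : 0 < ((j+1 : ℕ) : ℝ) * (1 - p) := by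
      apply mul_pos _ hq
      exact_mod_cast Nat.succ_pos j
    -- bpmf j * ((j+1) q) ≤ bpmf j * ((n-j) p) = bpmf (j+1) * (j+1) * q ... need bpmf j ≤ bpmf (j+1)
    by_cases hz : bpmf n p j = 0
    · rw [hz]; exact hnn
    have hjn : j < n := by omega
    have hposj : 0 < bpmf n p j := by
      have : 0 < (n.choose j : ℝ) := by
        exact_mod_cast Nat.choose_pos (by omega : j ≤ n)
      rw [bpmf]; positivity
    have : bpmf n p j * (((j+1 : ℕ) : ℝ) * (1 - p)) ≤ bpmf n p j * (((n - j : ℕ) : ℝ) * p) :=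
      mul_le_mul_of_nonneg_left hmono hposj.le
    have h2 : bpmf n p j * (((j+1 : ℕ) : ℝ) * (1 - p)) ≤ bpmf n p (j + 1) * (((j+1 : ℕ) : ℝ) * (1 - p)) := by
      calc bpmf n p j * (((j+1 : ℕ) : ℝ) * (1 - p)) ≤ bpmf n p j * (((n - j : ℕ) : ℝ) * p) := this
        _ = bpmf n p j * ((n - j : ℕ) : ℝ) * p := by ring
        _ = bpmf n p (j+1) * ((j+1 : ℕ) : ℝ) * (1 - p) := hrec.symm
        _ = bpmf n p (j + 1) * (((j+1 : ℕ) : ℝ) * (1 - p)) := by ring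
    exact le_of_mul_le_mul_right h2 hpos
  have main : ∀ d, d ≤ k → bpmf n p (k - d) ≤ bpmf n p k := by
    intro d
    induction d with
    | zero => intro _; simp
    | succ m ih =>
        intro hm
        have h1 : k - (m+1) < k := by omega
        have h2 : k - (m+1) + 1 = k - m := by omega
        calc bpmf n p (k - (m+1)) ≤ bpmf n p (k - (m+1) + 1) := step _ h1
          _ = bpmf n p (k - m) := by rw [h2]
          _ ≤ bpmf n p k := ih (by omega)
  intro j hj
  have hjj : j = k - (k - j) := by omega
  rw [hjj]
  exact main _ (by omega)

end star
section star2
variable {p : ℝ} {n k : ℕ}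

lemma vandermonde_pmf (hk : k ≤ n) :
    bpmf (2*n) p (2*k) = ∑ i ∈ Finset.range (2*k+1), bpmf n p i * bpmf n p (2*k - i) := by
  have hch : (2*n).choose (2*k) = ∑ i ∈ Finset.range (2*k+1), n.choose i * n.choose (2*k - i) := by
    rw [show 2*n = n+n by ring, Nat.add_choose_eq,
      Finset.Nat.sum_antidiagonal_eq_sum_range_succ_mk]
  rw [bpmf, hch]
  push_cast
  rw [Finset.sum_mul, Finset.sum_mul]
  apply Finset.sum_congr rfl
  intro i hi
  have hi2k : i ≤ 2*k := by
    have := Finset.mem_range.mp hi; omega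
  by_cases h1 : i ≤ n
  · by_cases h2 : 2*k - i ≤ n
    · have e1 : i + (2*k - i) = 2*k := by omega
      have e2 : (n - i) + (n - (2*k - i)) = 2*n - 2*k := by omega
      rw [bpmf, bpmf]
      calc (n.choose i : ℝ) * (n.choose (2*k-i) : ℝ) * p ^ (2*k) * (1-p) ^ (2*n - 2*k)
          = (n.choose i : ℝ) * (n.choose (2*k-i) : ℝ) * p ^ (i + (2*k - i)) * (1-p) ^ ((n - i) + (n - (2*k - i))) := by
            rw [e1, e2]
        _ = _ := by rw [pow_add, pow_add]; ring
    · have : n.choose (2*k - i) = 0 := Nat.choose_eq_zero_of_lt (by omega)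
      simp [bpmf, this]
  · have : n.choose i = 0 := Nat.choose_eq_zero_of_lt (by omega)
    simp [bpmf, this]

lemma sum_bpmf_reflect_le (hp : 0 ≤ p) (hp1 : p ≤ 1) (c : ℕ) (s : Finset ℕ)
    (hs : ∀ i ∈ s, i ≤ c) :
    ∑ i ∈ s, bpmf n p (c - i) ≤ 1 := by
  classical
  have h1 : ∑ j ∈ s.image (fun i => c - i), bpmf n p j = ∑ i ∈ s, bpmf n p (c - i) :=
    Finset.sum_image (fun x hx y hy hxy => by
      have := hs x hx; have := hs y hy; omega)
  rw [← h1]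
  exact sum_bpmf_le _ hp hp1

lemma star_ineq (hp : 0 < p) (hp1 : p < 1) (hk : k ≤ n) :
    bpmf (2*n) p (2*k) ≤ 2 * bpmf n p k := by
  have hp0 : (0:ℝ) ≤ p := hp.le
  have hp1' : p ≤ 1 := hp1.le
  have hak : 0 ≤ bpmf n p k := bpmf_nonneg hp0 hp1' k
  have hnn : ∀ j, 0 ≤ bpmf n p j := bpmf_nonneg hp0 hp1'
  rw [vandermonde_pmf hk]
  have hsplit : Finset.range (2*k+1) = Finset.range (k+1) ∪ Finset.Ico (k+1) (2*k+1) := by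
    simp only [Finset.range_eq_Ico]
    exact (Finset.Ico_union_Ico_eq_Ico (by omega) (by omega)).symm
  have hdisj : Disjoint (Finset.range (k+1)) (Finset.Ico (k+1) (2*k+1)) := by
    apply Finset.disjoint_left.mpr
    intro i hi h2
    simp only [Finset.mem_range] at hi
    simp only [Finset.mem_Ico] at h2
    omega
  rw [hsplit, Finset.sum_union hdisj]
  rcases le_total (((n - k : ℕ) : ℝ) * p) (((k+1 : ℕ) : ℝ) * (1 - p)) with hcase | hcase
  · -- non-increasing from k on: bpmf j ≤ bpmf k for j ≥ k
    have hmr := bpmf_mono_right hp hp1 hcase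
    have hb1 : ∑ i ∈ Finset.range (k+1), bpmf n p i * bpmf n p (2*k - i) ≤ bpmf n p k := by
      calc ∑ i ∈ Finset.range (k+1), bpmf n p i * bpmf n p (2*k - i)
          ≤ ∑ i ∈ Finset.range (k+1), bpmf n p i * bpmf n p k := by
            apply Finset.sum_le_sum
            intro i hi
            simp only [Finset.mem_range] at hi
            exact mul_le_mul_of_nonneg_left (hmr _ (by omega)) (hnn i)
        _ = (∑ i ∈ Finset.range (k+1), bpmf n p i) * bpmf n p k := by rw [Finset.sum_mul]
        _ ≤ 1 * bpmf n p k := mul_le_mul_of_nonneg_right (sum_bpmf_le _ hp0 hp1') hak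
        _ = bpmf n p k := one_mul _
    have hb2 : ∑ i ∈ Finset.Ico (k+1) (2*k+1), bpmf n p i * bpmf n p (2*k - i) ≤ bpmf n p k := by
      calc ∑ i ∈ Finset.Ico (k+1) (2*k+1), bpmf n p i * bpmf n p (2*k - i)
          ≤ ∑ i ∈ Finset.Ico (k+1) (2*k+1), bpmf n p k * bpmf n p (2*k - i) := by
            apply Finset.sum_le_sum
            intro i hi
            simp only [Finset.mem_Ico] at hi
            exact mul_le_mul_of_nonneg_right (hmr _ (by omega)) (hnn _)
        _ = bpmf n p k * ∑ i ∈ Finset.Ico (k+1) (2*k+1), bpmf n p (2*k - i) := by rw [Finset.mul_sum]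
        _ ≤ bpmf n p k * 1 := by
            apply mul_le_mul_of_nonneg_left _ hak
            apply sum_bpmf_reflect_le hp0 hp1'
            intro i hi
            simp only [Finset.mem_Ico] at hi
            omega
        _ = bpmf n p k := mul_one _
    linarith
  · -- non-decreasing up to k: bpmf j ≤ bpmf k for j ≤ k
    have hml := bpmf_mono_left hp hp1 hk hcase
    have hb1 : ∑ i ∈ Finset.range (k+1), bpmf n p i * bpmf n p (2*k - i) ≤ bpmf n p k := by
      calc ∑ i ∈ Finset.range (k+1), bpmf n p i * bpmf n p (2*k - i)
          ≤ ∑ i ∈ Finset.range (k+1), bpmf n p k * bpmf n p (2*k - i) := by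
            apply Finset.sum_le_sum
            intro i hi
            simp only [Finset.mem_range] at hi
            exact mul_le_mul_of_nonneg_right (hml _ (by omega)) (hnn _)
        _ = bpmf n p k * ∑ i ∈ Finset.range (k+1), bpmf n p (2*k - i) := by rw [Finset.mul_sum]
        _ ≤ bpmf n p k * 1 := by
            apply mul_le_mul_of_nonneg_left _ hak
            apply sum_bpmf_reflect_le hp0 hp1'
            intro i hi
            simp only [Finset.mem_range] at hi
            omega
        _ = bpmf n p k := mul_one _
    have hb2 : ∑ i ∈ Finset.Ico (k+1) (2*k+1), bpmf n p i * bpmf n p (2*k - i) ≤ bpmf n p k := by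
      calc ∑ i ∈ Finset.Ico (k+1) (2*k+1), bpmf n p i * bpmf n p (2*k - i)
          ≤ ∑ i ∈ Finset.Ico (k+1) (2*k+1), bpmf n p i * bpmf n p k := by
            apply Finset.sum_le_sum
            intro i hi
            simp only [Finset.mem_Ico] at hi
            exact mul_le_mul_of_nonneg_left (hml _ (by omega)) (hnn _)
        _ = (∑ i ∈ Finset.Ico (k+1) (2*k+1), bpmf n p i) * bpmf n p k := by rw [Finset.sum_mul]
        _ ≤ 1 * bpmf n p k := mul_le_mul_of_nonneg_right (sum_bpmf_le _ hp0 hp1') hak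
        _ = bpmf n p k := one_mul _
    linarith

end star2
section count
open Equiv

/-- the reference 2-to-1 map -/
def pi0 (n : ℕ) : Fin (2*n) → Fin n := fun i => (finProdFinEquiv.symm i).2

/-- `z` is consistent with `π`, i.e. a pull-back -/
def Cons {m n : ℕ} (z : Fin m → Bool) (π : Fin m → Fin n) : Prop :=
  ∃ x : Fin n → Bool, z = x ∘ π

instance {m n : ℕ} (z : Fin m → Bool) (π : Fin m → Fin n) : Decidable (Cons z π) := by
  unfold Cons; infer_instance

variable {n : ℕ}

lemma pi0_two2one : IsTwoToOne (pi0 n) := by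
  intro j
  have : (Finset.univ.filter (fun i => pi0 n i = j)).card = (Finset.univ : Finset (Fin 2)).card := by
    apply Finset.card_bij' (fun i _ => (finProdFinEquiv.symm i).1)
      (fun a _ => finProdFinEquiv (a, j))
    · intro i hi
      exact Finset.mem_univ _
    · intro a _
      exact Finset.mem_filter.mpr ⟨Finset.mem_univ _, by simp [pi0]⟩
    · intro i hi
      replace hi : pi0 n i = j := (Finset.mem_filter.mp hi).2
      rw [show ((finProdFinEquiv.symm i).1, j) = finProdFinEquiv.symm i from Prod.ext rfl hi.symm]
      exact Equiv.apply_symm_apply _ i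
    · intro a _
      simp
  rw [this]
  simp

lemma comp_perm_two2one (π : Fin (2*n) → Fin n) (hπ : IsTwoToOne π) (σ : Perm (Fin (2*n))) :
    IsTwoToOne (π ∘ ⇑σ) := by
  intro j
  have h := Fintype.card_congr
    ((σ.subtypeEquiv fun a => Iff.rfl) : {i // π (σ i) = j} ≃ {i // π i = j})
  rw [Fintype.card_subtype, Fintype.card_subtype] at h
  calc (Finset.univ.filter (fun i => (π ∘ ⇑σ) i = j)).card
      = (Finset.univ.filter (fun i => π (σ i) = j)).card := rfl
    _ = (Finset.univ.filter (fun i => π i = j)).card := h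
    _ = 2 := hπ j

lemma exists_perm_of_two2one (π : Fin (2*n) → Fin n) (hπ : IsTwoToOne π) :
    ∃ σ : Perm (Fin (2*n)), π = pi0 n ∘ ⇑σ := by
  have ecard : ∀ j, Fintype.card {i // π i = j} = Fintype.card {i // pi0 n i = j} := by
    intro j
    rw [Fintype.card_subtype, Fintype.card_subtype, hπ j, pi0_two2one j]
  let e : ∀ j, {i // π i = j} ≃ {i // pi0 n i = j} := fun j => Fintype.equivOfCardEq (ecard j)
  refine ⟨((Equiv.sigmaFiberEquiv π).symm.trans (Equiv.sigmaCongrRight e)).trans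
    (Equiv.sigmaFiberEquiv (pi0 n)), ?_⟩
  funext i
  have h1 : (((Equiv.sigmaFiberEquiv π).symm.trans (Equiv.sigmaCongrRight e)).trans
      (Equiv.sigmaFiberEquiv (pi0 n))) i = (e (π i) ⟨i, rfl⟩).val := rfl
  simp only [Function.comp_apply, h1]
  exact (e (π i) ⟨i, rfl⟩).prop.symm

end count
section count2
open Equiv

variable {n : ℕ}

/-- the stabilizer count -/
def Kst (n : ℕ) : ℕ := (Finset.univ.filter (fun σ : Perm (Fin (2*n)) => pi0 n ∘ ⇑σ = pi0 n)).card

lemma fiber_card (π : Fin (2*n) → Fin n) (hπ : IsTwoToOne π) :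
    (Finset.univ.filter (fun σ : Perm (Fin (2*n)) => pi0 n ∘ ⇑σ = π)).card = Kst n := by
  obtain ⟨σ₀, hσ₀⟩ := exists_perm_of_two2one π hπ
  apply Finset.card_bij' (fun σ _ => σ₀.symm.trans σ) (fun τ _ => σ₀.trans τ)
  · intro σ hσ
    simp only [Finset.mem_filter, Finset.mem_univ, true_and] at hσ ⊢
    funext x
    simp only [Function.comp_apply, Equiv.trans_apply]
    calc pi0 n (σ (σ₀.symm x)) = (pi0 n ∘ ⇑σ) (σ₀.symm x) := rfl
      _ = π (σ₀.symm x) := by rw [hσ]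
      _ = (pi0 n ∘ ⇑σ₀) (σ₀.symm x) := by rw [hσ₀]
      _ = pi0 n x := by simp
  · intro τ hτ
    simp only [Finset.mem_filter, Finset.mem_univ, true_and] at hτ ⊢
    funext x
    simp only [Function.comp_apply, Equiv.trans_apply]
    calc pi0 n (τ (σ₀ x)) = (pi0 n ∘ ⇑τ) (σ₀ x) := rfl
      _ = pi0 n (σ₀ x) := by rw [hτ]
      _ = π x := by rw [hσ₀]; rfl
  · intro σ _; ext x; simp
  · intro τ _; ext x; simp

lemma total_perm_eq : (2*n).factorial = (Finset.univ.filter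
    (fun π : Fin (2*n) → Fin n => IsTwoToOne π)).card * Kst n := by
  classical
  have H : ∀ σ ∈ (Finset.univ : Finset (Perm (Fin (2*n)))),
      (pi0 n ∘ ⇑σ) ∈ (Finset.univ.filter (fun π : Fin (2*n) → Fin n => IsTwoToOne π)) := by
    intro σ _
    simp only [Finset.mem_filter, Finset.mem_univ, true_and]
    exact comp_perm_two2one _ pi0_two2one σ
  have h := Finset.card_eq_sum_card_fiberwise H
  rw [Finset.card_univ, Fintype.card_perm, Fintype.card_fin] at h
  rw [h]
  rw [Finset.sum_congr rfl (fun π hπ => ?_), Finset.sum_const, smul_eq_mul]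
  simp only [Finset.mem_filter, Finset.mem_univ, true_and] at hπ
  exact fiber_card π hπ

lemma cons_perm_eq (z : Fin (2*n) → Bool) :
    (Finset.univ.filter (fun σ : Perm (Fin (2*n)) => Cons z (pi0 n ∘ ⇑σ))).card
    = ((Finset.univ.filter (fun π : Fin (2*n) → Fin n => IsTwoToOne π)).filter
        (fun π => Cons z π)).card * Kst n := by
  classical
  set T := Finset.univ.filter (fun π : Fin (2*n) → Fin n => IsTwoToOne π) with hT
  set s := Finset.univ.filter (fun σ : Perm (Fin (2*n)) => Cons z (pi0 n ∘ ⇑σ)) with hs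
  have H : ∀ σ ∈ s, (pi0 n ∘ ⇑σ) ∈ T := by
    intro σ _
    simp only [hT, Finset.mem_filter, Finset.mem_univ, true_and]
    exact comp_perm_two2one _ pi0_two2one σ
  have h := Finset.card_eq_sum_card_fiberwise H
  rw [h]
  have hfib : ∀ π ∈ T, (s.filter (fun σ : Perm (Fin (2*n)) => pi0 n ∘ ⇑σ = π)).card
      = if Cons z π then Kst n else 0 := by
    intro π hπ
    simp only [hT, Finset.mem_filter, Finset.mem_univ, true_and] at hπ
    by_cases hc : Cons z π
    · rw [if_pos hc]
      rw [show s.filter (fun σ : Perm (Fin (2*n)) => pi0 n ∘ ⇑σ = π)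
          = Finset.univ.filter (fun σ : Perm (Fin (2*n)) => pi0 n ∘ ⇑σ = π) from ?_]
      · exact fiber_card π hπ
      · ext σ
        simp only [hs, Finset.mem_filter, Finset.mem_univ, true_and]
        constructor
        · exact fun h => h.2
        · intro h; exact ⟨by rw [h]; exact hc, h⟩
    · rw [if_neg hc]
      rw [Finset.card_eq_zero]
      ext σ
      simp only [hs, Finset.mem_filter, Finset.mem_univ, true_and, Finset.notMem_empty,
        iff_false, not_and]
      intro h1 h2
      rw [h2] at h1
      exact hc h1
  rw [Finset.sum_congr rfl hfib, ← Finset.sum_filter, Finset.sum_const, smul_eq_mul]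

end count2
section count3
open Equiv

variable {n : ℕ}

lemma wt_comp (π : Fin (2*n) → Fin n) (hπ : IsTwoToOne π) (x : Fin n → Bool) :
    wt (x ∘ π) = 2 * wt x := by
  classical
  have H : ∀ i ∈ Finset.univ.filter (fun i => (x ∘ π) i = true), π i ∈ (Finset.univ : Finset (Fin n)) :=
    fun i _ => Finset.mem_univ _
  have h := Finset.card_eq_sum_card_fiberwise H
  rw [wt, h]
  have hfib : ∀ j ∈ (Finset.univ : Finset (Fin n)),
      ((Finset.univ.filter (fun i => (x ∘ π) i = true)).filter (fun i => π i = j)).card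
      = if x j = true then 2 else 0 := by
    intro j _
    by_cases hx : x j = true
    · rw [if_pos hx]
      have heq : (Finset.univ.filter (fun i => (x ∘ π) i = true)).filter (fun i => π i = j)
          = Finset.univ.filter (fun i => π i = j) := by
        ext i
        simp only [Finset.mem_filter, Finset.mem_univ, true_and, Function.comp_apply]
        constructor
        · exact fun h => h.2
        · intro h; exact ⟨by rw [h]; exact hx, h⟩
      rw [heq]
      exact hπ j
    · rw [if_neg hx, Finset.card_eq_zero]
      ext i
      simp only [Finset.mem_filter, Finset.mem_univ, true_and, Function.comp_apply,
        Finset.notMem_empty, iff_false, not_and]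
      intro h1 h2
      rw [h2] at h1
      exact hx h1
  rw [Finset.sum_congr rfl hfib, ← Finset.sum_filter, Finset.sum_const, smul_eq_mul, wt]
  ring

lemma cons_inv_card (z : Fin (2*n) → Bool) :
    (Finset.univ.filter (fun σ : Perm (Fin (2*n)) => Cons z (pi0 n ∘ ⇑σ))).card
    = (Finset.univ.filter (fun τ : Perm (Fin (2*n)) => Cons (z ∘ ⇑τ) (pi0 n))).card := by
  refine Finset.card_bij' (fun σ _ => σ.symm) (fun τ _ => τ.symm) ?_ ?_ ?_ ?_
  · intro σ hσ
    simp only [Finset.mem_filter, Finset.mem_univ, true_and] at hσ ⊢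
    obtain ⟨x, hx⟩ := hσ
    exact ⟨x, by funext i; rw [Function.comp_apply, show z (σ.symm i) = (x ∘ (pi0 n ∘ ⇑σ)) (σ.symm i) from by rw [← hx]]; simp⟩
  · intro τ hτ
    simp only [Finset.mem_filter, Finset.mem_univ, true_and] at hτ ⊢
    obtain ⟨x, hx⟩ := hτ
    refine ⟨x, funext fun i => ?_⟩
    have := congrFun hx (τ.symm i)
    simpa using this
  · intro σ _; simp
  · intro τ _; simp

/-- doubled indicator vector of `S` -/
def wS (n : ℕ) (S : Finset (Fin n)) : Fin (2*n) → Bool := fun i =>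
  decide ((finProdFinEquiv.symm i).2 ∈ S)

lemma wS_cons (S : Finset (Fin n)) : Cons (wS n S) (pi0 n) :=
  ⟨fun j => decide (j ∈ S), rfl⟩

lemma wS_injective : Function.Injective (wS n) := by
  intro S S' h
  ext j
  have := congrFun h (finProdFinEquiv ((0 : Fin 2), j))
  simp only [wS, Equiv.symm_apply_apply] at this
  constructor
  · intro hj; exact of_decide_eq_true (by rw [← this]; exact decide_eq_true hj)
  · intro hj; exact of_decide_eq_true (by rw [this]; exact decide_eq_true hj)

lemma wt_wS (S : Finset (Fin n)) : wt (wS n S) = 2 * S.card := by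
  rw [wt]
  have : (Finset.univ.filter (fun i => wS n S i = true)).card
      = ((Finset.univ : Finset (Fin 2)) ×ˢ S).card := by
    apply Finset.card_bij' (fun i _ => finProdFinEquiv.symm i) (fun q _ => finProdFinEquiv q)
    · intro i hi
      simp only [Finset.mem_filter, Finset.mem_univ, true_and, wS, decide_eq_true_eq] at hi
      simp only [Finset.mem_product, Finset.mem_univ, true_and]
      exact hi
    · intro q hq
      simp only [Finset.mem_product, Finset.mem_univ, true_and] at hq
      simp only [Finset.mem_filter, Finset.mem_univ, true_and, wS, Equiv.symm_apply_apply]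
      exact Finset.mem_filter.mpr ⟨Finset.mem_univ _, by simp only [Equiv.symm_apply_apply]; exact decide_eq_true hq⟩
    · intro i _; exact Equiv.apply_symm_apply _ i
    · intro q _; exact Equiv.symm_apply_apply _ q
  rw [this, Finset.card_product]
  simp [mul_comm]

end count3
section count4
open Equiv

variable {n : ℕ}

lemma subtypeCongr_apply_pos {α : Type*} {p q : α → Prop} [DecidablePred p] [DecidablePred q]
    (e : {x // p x} ≃ {x // q x}) (f : {x // ¬ p x} ≃ {x // ¬ q x}) (i : α) (h : p i) :
    Equiv.subtypeCongr e f i = (e ⟨i, h⟩ : {x // q x}).val := by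
  simp [Equiv.subtypeCongr, h]

lemma subtypeCongr_apply_neg {α : Type*} {p q : α → Prop} [DecidablePred p] [DecidablePred q]
    (e : {x // p x} ≃ {x // q x}) (f : {x // ¬ p x} ≃ {x // ¬ q x}) (i : α) (h : ¬ p i) :
    Equiv.subtypeCongr e f i = (f ⟨i, h⟩ : {x // ¬ q x}).val := by
  simp [Equiv.subtypeCongr, h]

lemma card_eqperm_ge (z wv : Fin (2*n) → Bool) (hwt : wt wv = wt z) :
    (wt z).factorial * (2*n - wt z).factorial
      ≤ (Finset.univ.filter (fun τ : Perm (Fin (2*n)) => z ∘ ⇑τ = wv)).card := by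
  classical
  have hcz : Fintype.card {i // z i = true} = wt z := by
    rw [Fintype.card_subtype]; rfl
  have hcw : Fintype.card {i // wv i = true} = wt z := by
    rw [Fintype.card_subtype, ← hwt]; rfl
  have hcz' : Fintype.card {i // ¬ z i = true} = 2*n - wt z := by
    rw [Fintype.card_subtype_compl, hcz, Fintype.card_fin]
  have hcw' : Fintype.card {i // ¬ wv i = true} = 2*n - wt z := by
    rw [Fintype.card_subtype_compl, hcw, Fintype.card_fin]
  have hereq : Fintype.card ({i // wv i = true} ≃ {i // z i = true}) = (wt z).factorial := by
    rw [Fintype.card_equiv (Fintype.equivOfCardEq (hcw.trans hcz.symm)), hcw]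
  have hereq' : Fintype.card ({i // ¬ wv i = true} ≃ {i // ¬ z i = true})
      = (2*n - wt z).factorial := by
    rw [Fintype.card_equiv (Fintype.equivOfCardEq (hcw'.trans hcz'.symm)), hcw']
  -- injection into the subtype of permutations
  set D := ({i // wv i = true} ≃ {i // z i = true}) × ({i // ¬ wv i = true} ≃ {i // ¬ z i = true})
    with hD
  have hprop : ∀ ee : D, z ∘ ⇑(Equiv.subtypeCongr ee.1 ee.2) = wv := by
    intro ee
    funext i
    by_cases h : wv i = true
    · rw [Function.comp_apply, subtypeCongr_apply_pos ee.1 ee.2 i h, h]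
      exact (ee.1 ⟨i, h⟩).prop
    · rw [Function.comp_apply, subtypeCongr_apply_neg ee.1 ee.2 i h]
      have := (ee.2 ⟨i, h⟩).prop
      rw [Bool.not_eq_true] at this h
      rw [this, h]
  have hinj : Function.Injective
      (fun ee : D => (⟨Equiv.subtypeCongr ee.1 ee.2, hprop ee⟩ :
        {τ : Perm (Fin (2*n)) // z ∘ ⇑τ = wv})) := by
    intro a b hab
    simp only [Subtype.mk_eq_mk] at hab
    have h1 : a.1 = b.1 := by
      apply Equiv.ext
      rintro ⟨i, hi⟩
      apply Subtype.ext
      calc (a.1 ⟨i, hi⟩).val = Equiv.subtypeCongr a.1 a.2 i := (subtypeCongr_apply_pos a.1 a.2 i hi).symm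
        _ = Equiv.subtypeCongr b.1 b.2 i := by rw [hab]
        _ = (b.1 ⟨i, hi⟩).val := subtypeCongr_apply_pos b.1 b.2 i hi
    have h2 : a.2 = b.2 := by
      apply Equiv.ext
      rintro ⟨i, hi⟩
      apply Subtype.ext
      calc (a.2 ⟨i, hi⟩).val = Equiv.subtypeCongr a.1 a.2 i := (subtypeCongr_apply_neg a.1 a.2 i hi).symm
        _ = Equiv.subtypeCongr b.1 b.2 i := by rw [hab]
        _ = (b.2 ⟨i, hi⟩).val := subtypeCongr_apply_neg b.1 b.2 i hi
    exact Prod.ext h1 h2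
  have hcard := Fintype.card_le_of_injective _ hinj
  rw [Fintype.card_prod, hereq, hereq'] at hcard
  calc (wt z).factorial * (2*n - wt z).factorial
      ≤ Fintype.card {τ : Perm (Fin (2*n)) // z ∘ ⇑τ = wv} := hcard
    _ = (Finset.univ.filter (fun τ : Perm (Fin (2*n)) => z ∘ ⇑τ = wv)).card := by
        rw [Fintype.card_subtype]

lemma cons_count_lower (z : Fin (2*n) → Bool) (k : ℕ) (hwt : wt z = 2*k) (hk : k ≤ n) :
    n.choose k * ((2*k).factorial * (2*n - 2*k).factorial)
      ≤ (Finset.univ.filter (fun τ : Perm (Fin (2*n)) => Cons (z ∘ ⇑τ) (pi0 n))).card := by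
  classical
  set B := (Finset.univ.powersetCard k (α := Fin n)).biUnion
    (fun S => Finset.univ.filter (fun τ : Perm (Fin (2*n)) => z ∘ ⇑τ = wS n S)) with hB
  have hdisj : ∀ S ∈ Finset.univ.powersetCard k (α := Fin n),
      ∀ S' ∈ Finset.univ.powersetCard k (α := Fin n), S ≠ S' →
      Disjoint (Finset.univ.filter (fun τ : Perm (Fin (2*n)) => z ∘ ⇑τ = wS n S))
        (Finset.univ.filter (fun τ : Perm (Fin (2*n)) => z ∘ ⇑τ = wS n S')) := by
    intro S _ S' _ hne
    apply Finset.disjoint_left.mpr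
    intro τ h1 h2
    simp only [Finset.mem_filter, Finset.mem_univ, true_and] at h1 h2
    exact hne (wS_injective (h1.symm.trans h2))
  have hcardB : B.card = ∑ S ∈ Finset.univ.powersetCard k (α := Fin n),
      (Finset.univ.filter (fun τ : Perm (Fin (2*n)) => z ∘ ⇑τ = wS n S)).card :=
    Finset.card_biUnion hdisj
  have hsub : B ⊆ Finset.univ.filter (fun τ : Perm (Fin (2*n)) => Cons (z ∘ ⇑τ) (pi0 n)) := by
    intro τ hτ
    simp only [hB, Finset.mem_biUnion, Finset.mem_filter, Finset.mem_univ, true_and] at hτ ⊢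
    obtain ⟨S, _, hS⟩ := hτ
    rw [hS]
    exact wS_cons S
  calc n.choose k * ((2*k).factorial * (2*n - 2*k).factorial)
      = ∑ _S ∈ Finset.univ.powersetCard k (α := Fin n), (2*k).factorial * (2*n - 2*k).factorial := by
        rw [Finset.sum_const, smul_eq_mul, Finset.card_powersetCard, Finset.card_univ,
          Fintype.card_fin]
    _ ≤ ∑ S ∈ Finset.univ.powersetCard k (α := Fin n),
        (Finset.univ.filter (fun τ : Perm (Fin (2*n)) => z ∘ ⇑τ = wS n S)).card := by
        apply Finset.sum_le_sum
        intro S hS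
        have hSk : S.card = k := (Finset.mem_powersetCard.mp hS).2
        have := card_eqperm_ge z (wS n S) (by rw [wt_wS, hSk, hwt])
        rw [hwt] at this
        exact this
    _ = B.card := hcardB.symm
    _ ≤ _ := Finset.card_le_card hsub

end count4
section rhobound
open Equiv

variable {n : ℕ} {p : ℝ}

lemma wt_le (z : Fin (2*n) → Bool) : wt z ≤ 2*n := by
  rw [wt]
  calc (Finset.univ.filter (fun i => z i = true)).card
      ≤ (Finset.univ : Finset (Fin (2*n))).card := Finset.card_filter_le _ _
    _ = 2*n := by simp

lemma rho_ge_half_mu (hp : 0 < p) (hp1 : p < 1) (z : Fin (2*n) → Bool)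
    (hev : Even (wt z)) : (1/2) * mu p z ≤ rho p n z := by
  classical
  obtain ⟨k, hk2⟩ := hev
  have hwt : wt z = 2*k := by omega
  have hk : k ≤ n := by have := wt_le z; omega
  set T := Finset.univ.filter (fun π : Fin (2*n) → Fin n => IsTwoToOne π) with hT
  have hpi0T : pi0 n ∈ T := by
    simp only [hT, Finset.mem_filter, Finset.mem_univ, true_and]
    exact pi0_two2one
  have hTpos : 0 < T.card := Finset.card_pos.mpr ⟨pi0 n, hpi0T⟩
  set P : ℝ := p^k * (1-p)^(n-k) with hP
  have hPnn : 0 ≤ P := by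
    have : (0:ℝ) ≤ 1 - p := by linarith
    positivity
  -- step A/B : numerator lower bound
  have hA : ∀ π ∈ T, (if Cons z π then P else 0)
      ≤ ∑ x : Fin n → Bool, if z = x ∘ π then mu p x else 0 := by
    intro π hπ
    simp only [hT, Finset.mem_filter, Finset.mem_univ, true_and] at hπ
    have hnn : ∀ x : Fin n → Bool, 0 ≤ if z = x ∘ π then mu p x else 0 := by
      intro x
      by_cases h : z = x ∘ π
      · rw [if_pos h]; exact mu_nonneg hp.le hp1.le x
      · rw [if_neg h]
    by_cases hc : Cons z π
    · rw [if_pos hc]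
      obtain ⟨x₀, hx₀⟩ := hc
      have hwx : wt z = 2 * wt x₀ := by rw [hx₀]; exact wt_comp π hπ x₀
      have hwk : wt x₀ = k := by omega
      have hval : (if z = x₀ ∘ π then mu p x₀ else 0) = P := by
        rw [if_pos hx₀, mu_eq_pow, hwk, hP]
      calc P = if z = x₀ ∘ π then mu p x₀ else 0 := hval.symm
        _ ≤ ∑ x : Fin n → Bool, if z = x ∘ π then mu p x else 0 :=
          Finset.single_le_sum (fun x _ => hnn x) (Finset.mem_univ x₀)
    · rw [if_neg hc]
      exact Finset.sum_nonneg fun x _ => hnn x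
  have hB : ((T.filter (fun π => Cons z π)).card : ℝ) * P
      ≤ ∑ π ∈ T, ∑ x : Fin n → Bool, if z = x ∘ π then mu p x else 0 := by
    calc ((T.filter (fun π => Cons z π)).card : ℝ) * P
        = ∑ π ∈ T, (if Cons z π then P else 0) := by
          rw [← Finset.sum_filter, Finset.sum_const, nsmul_eq_mul]
      _ ≤ _ := Finset.sum_le_sum hA
  -- counting identities
  have hSσ := cons_perm_eq z
  have htot := total_perm_eq (n := n)
  have hSinv := cons_inv_card z
  have hlow := cons_count_lower z k hwt hk
  set Sσ := (Finset.univ.filter (fun σ : Perm (Fin (2*n)) => Cons z (pi0 n ∘ ⇑σ))).card with hSs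
  set Cc := (T.filter (fun π => Cons z π)).card with hCc
  -- Cc * (2n)! = Sσ * T.card
  have hkey : Cc * (2*n).factorial = Sσ * T.card := by
    rw [htot, hSσ]; ring
  have hfactpos : (0:ℝ) < ((2*n).factorial : ℕ) := by
    exact_mod_cast Nat.factorial_pos (2*n)
  have hTposR : (0:ℝ) < (T.card : ℕ) := by exact_mod_cast hTpos
  -- rho ≥ Sσ * P / (2n)!
  have hrho1 : (Sσ : ℝ) * P / ((2*n).factorial : ℕ) ≤ rho p n z := by
    rw [rho]
    rw [div_le_div_iff₀ hfactpos hTposR]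
    calc (Sσ : ℝ) * P * T.card = ((Sσ * T.card : ℕ) : ℝ) * P := by push_cast; ring
      _ = ((Cc * (2*n).factorial : ℕ) : ℝ) * P := by rw [← hkey]
      _ = ((Cc : ℕ) : ℝ) * P * ((2*n).factorial : ℕ) := by push_cast; ring
      _ ≤ _ := by
          apply mul_le_mul_of_nonneg_right _ hfactpos.le
          exact hB
  -- lower bound Sσ
  have hS2 : (n.choose k * ((2*k).factorial * (2*n - 2*k).factorial) : ℕ) ≤ Sσ := by
    rw [hSinv]
    exact hlow
  have hrho2 : ((n.choose k * ((2*k).factorial * (2*n - 2*k).factorial) : ℕ) : ℝ) * P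
      / ((2*n).factorial : ℕ) ≤ rho p n z := by
    refine le_trans ?_ hrho1
    have hc : ((n.choose k * ((2*k).factorial * (2*n - 2*k).factorial) : ℕ) : ℝ) ≤ (Sσ : ℝ) :=
      Nat.cast_le.mpr hS2
    gcongr
  refine le_trans ?_ hrho2
  rw [le_div_iff₀ hfactpos]
  rw [mu_eq_pow, hwt]
  have hfacteq : (2*n).factorial = (2*n).choose (2*k) * ((2*k).factorial * (2*n - 2*k).factorial) := by
    rw [← mul_assoc]
    exact (Nat.choose_mul_factorial_mul_factorial (by omega : 2*k ≤ 2*n)).symm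
  have hstar : ((2*n).choose (2*k) : ℝ) * (p^(2*k) * (1-p)^(2*n-2*k))
      ≤ 2 * ((n.choose k : ℝ) * P) := by
    calc ((2*n).choose (2*k) : ℝ) * (p^(2*k) * (1-p)^(2*n-2*k))
        = bpmf (2*n) p (2*k) := by rw [bpmf]; ring
      _ ≤ 2 * bpmf n p k := star_ineq hp hp1 hk
      _ = 2 * ((n.choose k : ℝ) * P) := by rw [bpmf, hP]; ring
  have hFnn : (0:ℝ) ≤ (((2*k).factorial * (2*n - 2*k).factorial : ℕ) : ℝ) := by positivity
  calc (1/2) * (p^(2*k) * (1-p)^(2*n-2*k)) * ((2*n).factorial : ℕ)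
      = ((((2*k).factorial * (2*n - 2*k).factorial : ℕ) : ℝ)/2)
        * (((2*n).choose (2*k) : ℝ) * (p^(2*k) * (1-p)^(2*n-2*k))) := by
        rw [hfacteq]; push_cast; ring
    _ ≤ ((((2*k).factorial * (2*n - 2*k).factorial : ℕ) : ℝ)/2)
        * (2 * ((n.choose k : ℝ) * P)) := by
        apply mul_le_mul_of_nonneg_left hstar
        positivity
    _ = ((n.choose k * ((2*k).factorial * (2*n - 2*k).factorial) : ℕ) : ℝ) * P := by
        push_cast; ring

end rhobound

section parity
variable {p lam : ℝ} {m : ℕ}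

lemma rho_nonneg {n : ℕ} (hp : 0 ≤ p) (hp1 : p ≤ 1) (z : Fin (2*n) → Bool) : 0 ≤ rho p n z := by
  apply div_nonneg _ (Nat.cast_nonneg _)
  apply Finset.sum_nonneg
  intro π _
  apply Finset.sum_nonneg
  intro x _
  by_cases h : z = x ∘ π
  · rw [if_pos h]; exact mu_nonneg hp hp1 x
  · rw [if_neg h]

lemma odd_to_even (hl : 0 < lam) (hlam : lam < 1/2) (hp : lam ≤ p) (hp' : p ≤ 1 - lam)
    (h : (Fin m → Bool) → Bool) (i : Fin m) :
    lam * (∑ z : Fin m → Bool, if ¬ Even (wt z) ∧ h z = true then mu p z else 0)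
      ≤ (∑ z : Fin m → Bool, if Even (wt z) ∧ h z = true then mu p z else 0)
        + (∑ z : Fin m → Bool, if h z ≠ h (bflip z i) then mu p z else 0) := by
  have hp0 : 0 ≤ p := le_trans hl.le hp
  have hp1 : p ≤ 1 := by linarith
  have step1 : lam * (∑ z : Fin m → Bool, if ¬ Even (wt z) ∧ h z = true then mu p z else 0)
      ≤ ∑ z : Fin m → Bool, if ¬ Even (wt z) ∧ h z = true then mu p (bflip z i) else 0 := by
    rw [Finset.mul_sum]
    apply Finset.sum_le_sum
    intro z _
    by_cases hc : ¬ Even (wt z) ∧ h z = true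
    · rw [if_pos hc, if_pos hc]
      exact mu_bflip_ge hl hp hp' hlam z i
    · rw [if_neg hc, if_neg hc, mul_zero]
  have step2 : (∑ z : Fin m → Bool, if ¬ Even (wt z) ∧ h z = true then mu p (bflip z i) else 0)
      = ∑ z : Fin m → Bool,
          if ¬ Even (wt (bflip z i)) ∧ h (bflip z i) = true then mu p z else 0 := by
    rw [← Equiv.sum_comp (Function.Involutive.toPerm _ (bflip_involutive (n := m) i))
      (fun z => if ¬ Even (wt z) ∧ h z = true then mu p (bflip z i) else 0)]
    apply Finset.sum_congr rfl
    intro z _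
    have he : (Function.Involutive.toPerm _ (bflip_involutive (n := m) i)) z = bflip z i := rfl
    rw [he]
    rw [show bflip (bflip z i) i = z from bflip_involutive i z]
  have step3 : (∑ z : Fin m → Bool,
        if ¬ Even (wt (bflip z i)) ∧ h (bflip z i) = true then mu p z else 0)
      ≤ (∑ z : Fin m → Bool, if Even (wt z) ∧ h z = true then mu p z else 0)
        + (∑ z : Fin m → Bool, if h z ≠ h (bflip z i) then mu p z else 0) := by
    rw [← Finset.sum_add_distrib]
    apply Finset.sum_le_sum
    intro z _
    have hmu : 0 ≤ mu p z := mu_nonneg hp0 hp1 z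
    by_cases hc : ¬ Even (wt (bflip z i)) ∧ h (bflip z i) = true
    · rw [if_pos hc]
      have hev : Even (wt z) := by
        have := (even_wt_bflip_iff z i).not
        simp only [not_not] at this
        exact this.mp hc.1
      by_cases hz : h z = true
      · have h1 : (if Even (wt z) ∧ h z = true then mu p z else 0) = mu p z :=
          if_pos ⟨hev, hz⟩
        rw [h1]
        have : (0:ℝ) ≤ if h z ≠ h (bflip z i) then mu p z else 0 := by
          by_cases hd : h z ≠ h (bflip z i)
          · rw [if_pos hd]; exact hmu
          · rw [if_neg hd]
        linarith
      · have hd : h z ≠ h (bflip z i) := by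
          rw [hc.2]
          intro hcon
          exact hz hcon
        rw [if_pos hd]
        have : (0:ℝ) ≤ if Even (wt z) ∧ h z = true then mu p z else 0 := by
          by_cases he : Even (wt z) ∧ h z = true
          · rw [if_pos he]; exact hmu
          · rw [if_neg he]
        linarith
    · rw [if_neg hc]
      have h1 : (0:ℝ) ≤ if Even (wt z) ∧ h z = true then mu p z else 0 := by
        by_cases he : Even (wt z) ∧ h z = true
        · rw [if_pos he]; exact hmu
        · rw [if_neg he]
      have h2 : (0:ℝ) ≤ if h z ≠ h (bflip z i) then mu p z else 0 := by
        by_cases hd : h z ≠ h (bflip z i)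
        · rw [if_pos hd]; exact hmu
        · rw [if_neg hd]
      linarith
  calc lam * (∑ z : Fin m → Bool, if ¬ Even (wt z) ∧ h z = true then mu p z else 0)
      ≤ _ := step1
    _ = _ := step2
    _ ≤ _ := step3

end parity
/-- For every `λ ∈ (0,1/2)` and `δ > 0` there are `γ, β > 0` such that: for all
`p ∈ (λ,1−λ)` and Boolean `h : {0,1}^{2n} → {0,1}` with `E_{μ_p}[h] ≥ δ` and
`I^{(p)}(h) ≤ γ·n`, the pull-back expectation satisfies `E_{z∼ρ_p}[h] ≥ β`. -/
theorem expectation_large_in_pullback :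
    ∀ lam : ℝ, lam ∈ Set.Ioo (0:ℝ) (1/2) → ∀ δ : ℝ, 0 < δ →
    ∃ γ : ℝ, 0 < γ ∧ ∃ β : ℝ, 0 < β ∧
      ∀ (n : ℕ), 1 ≤ n → ∀ p : ℝ, p ∈ Set.Ioo lam (1 - lam) →
      ∀ h : (Fin (2*n) → Bool) → Bool,
        δ ≤ (∑ x : Fin (2*n) → Bool, mu p x * (if h x then 1 else 0)) →
        totalInf p h ≤ γ * n →
        β ≤ ∑ z : Fin (2*n) → Bool, rho p n z * (if h z then 1 else 0) := by
  intro lam hlam δ hδ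
  obtain ⟨hl0, hl2⟩ := hlam
  refine ⟨lam^2 * δ / 4, by positivity, lam * δ / 4, by positivity, ?_⟩
  intro n hn p hp h hE hI
  obtain ⟨hpl, hpu⟩ := hp
  have hp0 : 0 < p := lt_of_le_of_lt hl0.le hpl
  have hp1 : p < 1 := by
    have : lam > 0 := hl0
    linarith
  -- the even and odd parts of the expectation
  set SE := ∑ z : Fin (2*n) → Bool, if Even (wt z) ∧ h z = true then mu p z else 0 with hSE
  set SO := ∑ z : Fin (2*n) → Bool, if ¬ Even (wt z) ∧ h z = true then mu p z else 0 with hSO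
  have hmunn : ∀ z : Fin (2*n) → Bool, 0 ≤ mu p z := fun z => mu_nonneg hp0.le hp1.le z
  have hSEnn : 0 ≤ SE := by
    apply Finset.sum_nonneg
    intro z _
    by_cases hc : Even (wt z) ∧ h z = true
    · rw [if_pos hc]; exact hmunn z
    · rw [if_neg hc]
  have hsplit : SE + SO = ∑ x : Fin (2*n) → Bool, mu p x * (if h x then 1 else 0) := by
    rw [hSE, hSO, ← Finset.sum_add_distrib]
    apply Finset.sum_congr rfl
    intro z _
    by_cases hz : h z = true
    · rw [if_pos hz]
      by_cases he : Even (wt z)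
      · rw [if_pos ⟨he, hz⟩, if_neg (by simp [he, hz]), mul_one, add_zero]
      · rw [if_neg (by simp [he]), if_pos ⟨he, hz⟩, mul_one, zero_add]
    · rw [if_neg (by simp [hz]), if_neg (by simp [hz]), if_neg hz, mul_zero, add_zero]
  have hδSES : δ ≤ SE + SO := by rw [hsplit]; exact hE
  -- pick a coordinate with small influence
  set γ := lam^2 * δ / 4 with hγ
  have hγpos : 0 < γ := by positivity
  have hexist : ∃ i : Fin (2*n), pinf p h i ≤ γ / 2 := by
    by_contra hcon
    push_neg at hcon
    have hne : (Finset.univ : Finset (Fin (2*n))).Nonempty := by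
      rw [Finset.univ_nonempty_iff]
      have : 0 < 2*n := by omega
      exact Fin.pos_iff_nonempty.mp this
    have hsum : ∑ _i : Fin (2*n), γ/2 < ∑ i : Fin (2*n), pinf p h i :=
      Finset.sum_lt_sum_of_nonempty hne fun i _ => hcon i
    rw [Finset.sum_const, Finset.card_univ, Fintype.card_fin, nsmul_eq_mul] at hsum
    have h2n : ((2*n : ℕ) : ℝ) * (γ/2) = γ * n := by push_cast; ring
    rw [h2n] at hsum
    have : totalInf p h ≤ γ * n := hI
    rw [totalInf] at this
    linarith
  obtain ⟨i, hi⟩ := hexist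
  -- bound the disagreement mass
  set D := ∑ x : Fin (2*n) → Bool, if h x ≠ h (bflip x i) then mu p x else 0 with hD
  have hDnn : 0 ≤ D := by
    apply Finset.sum_nonneg
    intro x _
    by_cases hc : h x ≠ h (bflip x i)
    · rw [if_pos hc]; exact hmunn x
    · rw [if_neg hc]
  have hpinf : pinf p h i = p * (1-p) * D := rfl
  have hpq : lam / 2 ≤ p * (1-p) := by nlinarith
  have hDb : D ≤ lam * δ / 4 := by
    have h1 : (lam/2) * D ≤ p * (1-p) * D := mul_le_mul_of_nonneg_right hpq hDnn
    have h2 : p * (1-p) * D ≤ γ/2 := by rw [← hpinf]; exact hi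
    have h3 : (lam/2) * D ≤ γ/2 := le_trans h1 h2
    rw [hγ] at h3
    nlinarith
  -- parity transfer
  have hkey := odd_to_even hl0 hl2 hpl.le hpu.le h i
  rw [← hSO, ← hSE, ← hD] at hkey
  -- SE is large
  have hSEbig : lam * δ / 2 ≤ SE := by
    have hOl : δ - SE ≤ SO := by linarith
    have h4 : lam * (δ - SE) ≤ lam * SO := mul_le_mul_of_nonneg_left hOl hl0.le
    have h5 : lam * SO ≤ SE + lam * δ / 4 := by linarith
    nlinarith
  -- conclude via the pointwise bound on rho
  have hfinal : ∑ z : Fin (2*n) → Bool, (if Even (wt z) ∧ h z = true then (1/2) * mu p z else 0)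
      ≤ ∑ z : Fin (2*n) → Bool, rho p n z * (if h z then 1 else 0) := by
    apply Finset.sum_le_sum
    intro z _
    by_cases hc : Even (wt z) ∧ h z = true
    · rw [if_pos hc, hc.2, if_pos rfl, mul_one]
      exact rho_ge_half_mu hp0 hp1 z hc.1
    · rw [if_neg hc]
      by_cases hz : h z = true
      · rw [hz, if_pos rfl, mul_one]
        exact rho_nonneg hp0.le hp1.le z
      · rw [if_neg hz, mul_zero]
  have hhalf : ∑ z : Fin (2*n) → Bool, (if Even (wt z) ∧ h z = true then (1/2) * mu p z else 0)
      = (1/2) * SE := by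
    rw [hSE, Finset.mul_sum]
    apply Finset.sum_congr rfl
    intro z _
    by_cases hc : Even (wt z) ∧ h z = true
    · rw [if_pos hc, if_pos hc]
    · rw [if_neg hc, if_neg hc, mul_zero]
  calc lam * δ / 4 = (1/2) * (lam * δ / 2) := by ring
    _ ≤ (1/2) * SE := by linarith
    _ = _ := hhalf.symm
    _ ≤ _ := hfinal
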